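/- arXiv:2011.09845 — 2 statements merged into one kernel-verified Lean document; each statement's English description precedes it below -/
import Mathlib

section
/- For every integer Z ≥ 2, one has (1 - 2/Z²) > (1 - 2/(Z³ - Z²))^Z. -/
/-- Theorem 3.3, inequality (1): for every integer `Z ≥ 2`,
`(1 - 2/Z²) > (1 - 2/(Z³ - Z²))^Z`. -/
theorem stmt_0 (Z : ℕ) (hZ : 2 ≤ Z) :
    (1 - 2 / (Z : ℝ) ^ 2) > (1 - 2 / ((Z : ℝ) ^ 3 - (Z : ℝ) ^ 2)) ^ Z := by
  set z : ℝ := (Z : ℝ) with hzdef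
  have hz : (2:ℝ) ≤ z := by rw [hzdef]; exact_mod_cast hZ
  have hd : (0:ℝ) < z ^ 3 - z ^ 2 := by nlinarith
  set x : ℝ := 2 / (z ^ 3 - z ^ 2) with hx
  have hx0 : 0 < x := by positivity
  have hx1 : x ≤ 1/2 := by
    rw [hx, div_le_div_iff₀ hd (by norm_num)]
    nlinarith
  have h1 : 1 + (Z:ℝ) * x ≤ (1 + x) ^ Z := one_add_mul_le_pow (by nlinarith) Z
  have h2 : (1 - x) ^ Z * (1 + x) ^ Z < 1 := by
    rw [← mul_pow]
    exact pow_lt_one₀ (by nlinarith) (by nlinarith) (by omega)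
  have hpos : 0 < 1 + (Z:ℝ) * x := by positivity
  have h3 : (1 - x) ^ Z * (1 + (Z:ℝ) * x) < 1 :=
    lt_of_le_of_lt (mul_le_mul_of_nonneg_left h1 (pow_nonneg (by nlinarith) Z)) h2
  have hZx : (Z:ℝ) * x = 2 * z / (z ^ 3 - z ^ 2) := by
    rw [hx, ← hzdef]; ring
  have key : 1 ≤ (1 - 2 / z ^ 2) * (1 + (Z:ℝ) * x) := by
    rw [hZx, ← sub_nonneg]
    have hz2 : z ^ 2 ≠ 0 := by positivity
    have heq : (1 - 2 / z ^ 2) * (1 + 2 * z / (z ^ 3 - z ^ 2)) - 1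
        = (2 * z - 4) / (z ^ 2 * (z ^ 2 - z)) := by
      have hd2 : (0:ℝ) < z ^ 2 - z := by nlinarith
      have hd2' : z ^ 2 - z ≠ 0 := ne_of_gt hd2
      have hd' : z ^ 3 - z ^ 2 ≠ 0 := ne_of_gt hd
      have hz1 : z - 1 ≠ 0 := ne_of_gt (by linarith)
      field_simp
      ring
    rw [heq]
    have h4 : 0 ≤ 2 * z - 4 := by linarith
    have hd2 : (0:ℝ) < z ^ 2 - z := by nlinarith
    positivity
  have := lt_of_lt_of_le h3 key
  exact (mul_lt_mul_iff_of_pos_right hpos).mp this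
end

section
/- For every integer Z ≥ 2 and all natural numbers a and b, (1 + 2/(Z² - 1))^a · (1 + 2/(Z³ - Z² - 1))^b ≤ (1 + 2/(Z³ - Z² - 1))^{aZ + b}. -/
/-- Iterated form of Theorem 3.3 (2): for every integer `Z ≥ 2` and naturals `a, b`,
`(1 + 2/(Z² - 1))^a · (1 + 2/(Z³ - Z² - 1))^b ≤ (1 + 2/(Z³ - Z² - 1))^(aZ + b)`. -/
theorem stmt_3 (Z : ℕ) (hZ : 2 ≤ Z) (a b : ℕ) :
    (1 + 2 / ((Z : ℝ) ^ 2 - 1)) ^ a * (1 + 2 / ((Z : ℝ) ^ 3 - (Z : ℝ) ^ 2 - 1)) ^ b ≤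
      (1 + 2 / ((Z : ℝ) ^ 3 - (Z : ℝ) ^ 2 - 1)) ^ (a * Z + b) := by
  have hZ2 : (2 : ℝ) ≤ (Z : ℝ) := by exact_mod_cast hZ
  have hd1 : (3 : ℝ) ≤ (Z : ℝ) ^ 2 - 1 := by nlinarith
  have hd2 : (3 : ℝ) ≤ (Z : ℝ) ^ 3 - (Z : ℝ) ^ 2 - 1 := by nlinarith
  have h1 : (0:ℝ) < (Z : ℝ) ^ 2 - 1 := by linarith
  have h2 : (0:ℝ) < (Z : ℝ) ^ 3 - (Z : ℝ) ^ 2 - 1 := by linarith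
  set x : ℝ := 1 + 2 / ((Z : ℝ) ^ 3 - (Z : ℝ) ^ 2 - 1) with hx
  have hnn : 0 ≤ 2 / ((Z : ℝ) ^ 3 - (Z : ℝ) ^ 2 - 1) := by positivity
  have hx1 : (1 : ℝ) ≤ x := by rw [hx]; linarith
  have hkey : 1 + 2 / ((Z : ℝ) ^ 2 - 1) ≤ x ^ Z := by
    have hb : 1 + (Z : ℝ) * (2 / ((Z : ℝ) ^ 3 - (Z : ℝ) ^ 2 - 1)) ≤ x ^ Z := by
      have := one_add_mul_le_pow (a := 2 / ((Z : ℝ) ^ 3 - (Z : ℝ) ^ 2 - 1))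
        (by linarith : (-2 : ℝ) ≤ _) Z
      simpa [mul_comm] using this
    refine le_trans ?_ hb
    have hmid : 2 / ((Z : ℝ) ^ 2 - 1) ≤ (Z : ℝ) * (2 / ((Z : ℝ) ^ 3 - (Z : ℝ) ^ 2 - 1)) := by
      rw [mul_div_assoc', div_le_div_iff₀ h1 h2]
      nlinarith
    linarith
  have hL : (0:ℝ) ≤ 1 + 2 / ((Z : ℝ) ^ 2 - 1) := by positivity
  calc (1 + 2 / ((Z : ℝ) ^ 2 - 1)) ^ a * x ^ b
      ≤ (x ^ Z) ^ a * x ^ b := by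
        gcongr
    _ = x ^ (a * Z + b) := by rw [pow_add, ← pow_mul, mul_comm Z a]
end
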